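/- Single-triggered-stabilizer case of the proof of Theorem 2: let m ≥ 5. For every fault pattern F with w(F) ≤ 2 whose observed syndrome has exactly one triggered bit (|supp s(F)| = 1), the data error satisfies wt(e(F)) ≤ w(F); hence applying no correction is safe when a single cat stabilizer is triggered. -/
import Mathlib


open scoped Classical

namespace CutCat

/-- A fault in the cut-cat single-round fault model, located at cat qubit `r`. -/
inductive Fault (m : ℕ) where
  | pre  (r : ZMod m)
  | mid  (r : ZMod m)
  | post (r : ZMod m)
  | meas (r : ZMod m)

variable {m : ℕ}

/-- The index (in `ZMod (2*m)`) of the data qubit `2r` coupled to cat qubit `r`. -/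
def d0 (r : ZMod m) : ZMod (2 * m) := 2 * (r.val : ZMod (2 * m))

/-- The data-qubit error contributed by a single fault. -/
def Fault.dataErr : Fault m → ZMod (2 * m) → ZMod 2
  | .pre r  => fun q => (if q = d0 r then 1 else 0) + (if q = d0 r + 1 then 1 else 0)
  | .mid r  => fun q => if q = d0 r + 1 then 1 else 0
  | .post _ => 0
  | .meas _ => 0

/-- The cat-stabilizer syndrome contribution of a single fault
    (syndrome bit `j` checks cat qubits `j` and `j+1`). -/
def Fault.syn : Fault m → ZMod m → ZMod 2
  | .pre r  => fun j => (if j = r - 1 then 1 else 0) + (if j = r then 1 else 0)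
  | .mid r  => fun j => (if j = r - 1 then 1 else 0) + (if j = r then 1 else 0)
  | .post r => fun j => (if j = r - 1 then 1 else 0) + (if j = r then 1 else 0)
  | .meas r => fun j => if j = r then 1 else 0

/-- The data error `e(F)` of a fault pattern `F` (coordinatewise mod-2 sum). -/
def dataErr (F : Multiset (Fault m)) : ZMod (2 * m) → ZMod 2 :=
  (F.map Fault.dataErr).sum

/-- The observed syndrome `s(F)` of a fault pattern `F` (coordinatewise mod-2 sum). -/
def synd (F : Multiset (Fault m)) : ZMod m → ZMod 2 :=
  (F.map Fault.syn).sum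

/-- Hamming weight of a binary vector. -/
noncomputable def wt {n : ℕ} (f : ZMod n → ZMod 2) : ℕ := {i | f i ≠ 0}.ncard

/-- The set of triggered syndrome bits, `supp s(F)`. -/
def suppSyn (F : Multiset (Fault m)) : Set (ZMod m) := {j | synd F j = 1}

/-- Boundary of a set of cat qubits: checks `j` with exactly one of `j`, `j+1` in `E`. -/
def boundary (E : Set (ZMod m)) : Set (ZMod m) := {j | Xor' (j ∈ E) (j + 1 ∈ E)}

/-- Indicator (as a binary data vector) of the set `{2r+1 : r ∈ E}`. -/
noncomputable def indicOdd (E : Set (ZMod m)) : ZMod (2 * m) → ZMod 2 :=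
  fun q => if ∃ r ∈ E, q = d0 r + 1 then 1 else 0

/-- Indicator of a single data position `j`. -/
def indic {n : ℕ} (j : ZMod n) : ZMod n → ZMod 2 := fun q => if q = j then 1 else 0

/-- `c` is the correction output by the minimum-weight decoder with parameter `t`
    on syndrome `s(F)`: if there is a set `E` of at most `t` cat qubits whose
    boundary equals `supp s(F)`, then `c` is the indicator of `{2r+1 : r ∈ E}`;
    otherwise `c = 0`. -/
def IsDecoderCorrection (t : ℕ) (F : Multiset (Fault m)) (c : ZMod (2 * m) → ZMod 2) : Prop :=
  (∃ E : Set (ZMod m), E.ncard ≤ t ∧ boundary E = suppSyn F ∧ c = indicOdd E) ∨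
  ((¬ ∃ E : Set (ZMod m), E.ncard ≤ t ∧ boundary E = suppSyn F) ∧ c = 0)

/-- `true` iff the fault is a measurement fault. -/
def Fault.isMeas : Fault m → Bool
  | .meas _ => true
  | _ => false

lemma wt_le_two (f : Fault m) : wt f.dataErr ≤ 2 := by
  cases f with
  | pre r =>
    have hsub : {q | Fault.dataErr (.pre r : Fault m) q ≠ 0} ⊆
        ({d0 r, d0 r + 1} : Set (ZMod (2 * m))) := by
      intro q hq
      simp only [Fault.dataErr, Set.mem_setOf_eq] at hq
      by_contra hq'
      simp only [Set.mem_insert_iff, Set.mem_singleton_iff] at hq'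
      push_neg at hq'
      simp [hq'.1, hq'.2] at hq
    calc wt (Fault.dataErr (.pre r : Fault m))
        ≤ ({d0 r, d0 r + 1} : Set (ZMod (2 * m))).ncard :=
          Set.ncard_le_ncard hsub (Set.toFinite _)
      _ ≤ 2 := le_trans (Set.ncard_insert_le _ _) (by simp)
  | mid r =>
    have hsub : {q | Fault.dataErr (.mid r : Fault m) q ≠ 0} ⊆
        ({d0 r + 1} : Set (ZMod (2 * m))) := by
      intro q hq
      simp only [Fault.dataErr, Set.mem_setOf_eq] at hq
      by_contra hq'
      simp only [Set.mem_singleton_iff] at hq'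
      simp [hq'] at hq
    calc wt (Fault.dataErr (.mid r : Fault m))
        ≤ ({d0 r + 1} : Set (ZMod (2 * m))).ncard :=
          Set.ncard_le_ncard hsub (Set.toFinite _)
      _ ≤ 2 := by simp
  | post r => simp [wt, Fault.dataErr]
  | meas r => simp [wt, Fault.dataErr]

lemma sum_syn [NeZero m] (f : Fault m) :
    ∑ j : ZMod m, f.syn j = if f.isMeas then 1 else 0 := by
  cases f with
  | pre r =>
    simp only [Fault.syn, Fault.isMeas, Finset.sum_add_distrib, Finset.sum_ite_eq',
      Finset.mem_univ, if_true, Bool.false_eq_true, if_false]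
    decide
  | mid r =>
    simp only [Fault.syn, Fault.isMeas, Finset.sum_add_distrib, Finset.sum_ite_eq',
      Finset.mem_univ, if_true, Bool.false_eq_true, if_false]
    decide
  | post r =>
    simp only [Fault.syn, Fault.isMeas, Finset.sum_add_distrib, Finset.sum_ite_eq',
      Finset.mem_univ, if_true, Bool.false_eq_true, if_false]
    decide
  | meas r =>
    simp [Fault.syn, Fault.isMeas, Finset.sum_ite_eq']

lemma sum_synd [NeZero m] (F : Multiset (Fault m)) :
    ∑ j : ZMod m, synd F j = ((suppSyn F).ncard : ZMod 2) := by
  have h1 : ∀ x : ZMod 2, x = if x = 1 then 1 else 0 := by decide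
  have h2 : suppSyn F = ↑(Finset.univ.filter fun j => synd F j = 1) := by
    ext j; simp [suppSyn]
  rw [h2, Set.ncard_coe_finset, ← Finset.sum_boole]
  exact Finset.sum_congr rfl fun j _ => h1 _

end CutCat

/-- Single-triggered-stabilizer case of the proof of Theorem 2: if `w(F) ≤ 2`
and exactly one cat stabilizer is triggered, then `wt(e(F)) ≤ w(F)`,
so no correction is needed. -/
theorem cutcat_d5_single_triggered (m : ℕ) (hm : 5 ≤ m)
    (F : Multiset (CutCat.Fault m)) (hF : Multiset.card F ≤ 2)
    (hs : (CutCat.suppSyn F).ncard = 1) :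
    CutCat.wt (CutCat.dataErr F) ≤ Multiset.card F := by
  haveI : NeZero m := ⟨by omega⟩
  have hsum : ∑ j : ZMod m, CutCat.synd F j = 1 := by
    rw [CutCat.sum_synd, hs]; norm_num
  have hc : Multiset.card F = 0 ∨ Multiset.card F = 1 ∨ Multiset.card F = 2 := by omega
  rcases hc with hc | hc | hc
  · rw [Multiset.card_eq_zero] at hc; subst hc
    simp [CutCat.synd] at hsum
  · obtain ⟨f, rfl⟩ := Multiset.card_eq_one.mp hc
    have h1 : CutCat.synd ({f} : Multiset (CutCat.Fault m)) = f.syn := by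
      simp [CutCat.synd]
    rw [h1, CutCat.sum_syn] at hsum
    cases f with
    | pre r => simp [CutCat.Fault.isMeas] at hsum
    | mid r => simp [CutCat.Fault.isMeas] at hsum
    | post r => simp [CutCat.Fault.isMeas] at hsum
    | meas r =>
      have h2 : CutCat.dataErr ({CutCat.Fault.meas r} : Multiset (CutCat.Fault m)) = 0 := by
        simp [CutCat.dataErr, CutCat.Fault.dataErr]
      rw [h2]
      simp [CutCat.wt]
  · obtain ⟨f, g, rfl⟩ := Multiset.card_eq_two.mp hc
    have h1 : CutCat.synd ({f, g} : Multiset (CutCat.Fault m)) = f.syn + g.syn := by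
      simp [CutCat.synd]
    have hsum' : (if f.isMeas then (1 : ZMod 2) else 0) + (if g.isMeas then 1 else 0) = 1 := by
      rw [← CutCat.sum_syn f, ← CutCat.sum_syn g, ← Finset.sum_add_distrib]
      rw [← hsum]
      exact Finset.sum_congr rfl fun j _ => by rw [h1]; rfl
    have hcard : Multiset.card ({f, g} : Multiset (CutCat.Fault m)) = 2 := hc
    rw [hcard]
    have hde : ∀ a b : CutCat.Fault m,
        CutCat.dataErr ({a, b} : Multiset (CutCat.Fault m)) = a.dataErr + b.dataErr := by
      intro a b; simp [CutCat.dataErr]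
    cases hf : f.isMeas <;> cases hg : g.isMeas <;> rw [hf, hg] at hsum'
    · exact absurd hsum' (by decide)
    · -- g is meas, data error = f's
      have hg0 : g.dataErr = 0 := by
        cases g <;> simp_all [CutCat.Fault.isMeas, CutCat.Fault.dataErr]
      rw [hde f g, hg0, add_zero]
      exact CutCat.wt_le_two f
    · have hf0 : f.dataErr = 0 := by
        cases f <;> simp_all [CutCat.Fault.isMeas, CutCat.Fault.dataErr]
      rw [hde f g, hf0, zero_add]
      exact CutCat.wt_le_two g
    · exact absurd hsum' (by decide)
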